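/- arXiv:0804.0453 — 2 statements merged into one kernel-verified Lean document; each statement's English description precedes it below -/
import Mathlib

section
/- Let (Ω,d,μ) be a metric probability space, 1 ≤ q < ∞, and let N ∈ 𝒩 be such that t ↦ N(t)^{1/q}/t is non-decreasing on (0,∞). The following are equivalent: (1) D₁·‖f − M_μ f‖_{N(μ)} ≤ ‖|∇f|‖_{L_q(μ)} for all f ∈ ℱ; (2) D₂·‖f − M_μ f‖_{N(μ),∞} ≤ ‖|∇f|‖_{L_q(μ)} for all f ∈ ℱ. The best constants satisfy D₁ ≤ D₂ ≤ 4 D₁. -/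
open MeasureTheory Filter Set Metric
open scoped ENNReal NNReal Topology

noncomputable section

/-- The class 𝒩 of continuous increasing functions mapping ℝ₊ onto ℝ₊. -/
structure MemN (N : ℝ → ℝ) : Prop where
  contOn : ContinuousOn N (Ici 0)
  strictMonoOn : StrictMonoOn N (Ici 0)
  mapsTo : MapsTo N (Ici 0) (Ici 0)
  surjOn : SurjOn N (Ici 0) (Ici 0)

/-- A Young function: convex, increasing, vanishing at 0. -/
structure IsYoung (N : ℝ → ℝ) : Prop where
  convexOn : ConvexOn ℝ (Ici 0) N
  strictMonoOn : StrictMonoOn N (Ici 0)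
  zero : N 0 = 0

/-- The (generalized) inverse `N⁻¹` of `N : ℝ₊ → ℝ₊`. -/
def ninv (N : ℝ → ℝ) (y : ℝ) : ℝ := sInf {t : ℝ | 0 ≤ t ∧ y ≤ N t}

/-- The adjoint function `N^∧(t) = 1 / N⁻¹(1/t)`. -/
def nwedge (N : ℝ → ℝ) (t : ℝ) : ℝ := 1 / ninv N (1 / t)

variable {Ω : Type*}

/-- The class ℱ of functions which are Lipschitz on every ball. -/
def LipschitzOnBalls [PseudoMetricSpace Ω] (f : Ω → ℝ) : Prop :=
  ∀ (x : Ω) (r : ℝ), ∃ K : ℝ≥0, LipschitzOnWith K f (Metric.ball x r)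

/-- The modulus of the gradient `|∇f|(x)` (equal to 0 at isolated points). -/
def gradNorm [PseudoMetricSpace Ω] (f : Ω → ℝ) (x : Ω) : ℝ :=
  limsup (fun y => |f y - f x| / dist y x) (𝓝[≠] x)

/-- `‖ |∇f| ‖_{L_q(μ)}`. -/
def gradLqNorm [PseudoMetricSpace Ω] [MeasurableSpace Ω] (μ : Measure Ω) (q : ℝ≥0∞)
    (f : Ω → ℝ) : ℝ≥0∞ :=
  eLpNorm (gradNorm f) q μ

/-- The Orlicz (quasi-)norm `‖f‖_{N(μ)}`. -/
def orliczNorm [MeasurableSpace Ω] (μ : Measure Ω) (N : ℝ → ℝ) (f : Ω → ℝ) : ℝ :=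
  sInf {v : ℝ | 0 < v ∧ ∫⁻ x, ENNReal.ofReal (N (|f x| / v)) ∂μ ≤ 1}

/-- The dual norm `‖f‖_{N(μ)*}`. -/
def dualOrliczNorm [MeasurableSpace Ω] (μ : Measure Ω) (N : ℝ → ℝ) (f : Ω → ℝ) : ℝ :=
  sSup {r : ℝ | ∃ g : Ω → ℝ, orliczNorm μ N g ≤ 1 ∧ r = ∫ x, f x * g x ∂μ}

/-- The weak Orlicz quasi-norm `‖f‖_{N(μ),∞} = sup_{t>0} N^∧(μ{|f|≥t})·t`. -/
def weakOrliczNorm [MeasurableSpace Ω] (μ : Measure Ω) (N : ℝ → ℝ) (f : Ω → ℝ) : ℝ :=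
  sSup {r : ℝ | ∃ t : ℝ, 0 < t ∧ r = nwedge N ((μ {x | t ≤ |f x|}).toReal) * t}

/-- `m` is a median of `f` under `μ`. -/
def IsMedian [MeasurableSpace Ω] (μ : Measure Ω) (f : Ω → ℝ) (m : ℝ) : Prop :=
  (1 / 2 : ℝ≥0∞) ≤ μ {x | m ≤ f x} ∧ (1 / 2 : ℝ≥0∞) ≤ μ {x | f x ≤ m}

/-- Minkowski's exterior boundary measure `μ⁺(A)`. -/
def boundaryMeasure [PseudoMetricSpace Ω] [MeasurableSpace Ω] (μ : Measure Ω) (A : Set Ω) :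
    ℝ≥0∞ :=
  liminf (fun ε : ℝ => (μ (Metric.thickening ε A) - μ A) / ENNReal.ofReal ε) (𝓝[>] (0 : ℝ))

/-- The isoperimetric profile `I(t)`: the maximal function with `μ⁺(A) ≥ I(μ(A))`. -/
def isoProfile [PseudoMetricSpace Ω] [MeasurableSpace Ω] (μ : Measure Ω) (t : ℝ) : ℝ≥0∞ :=
  ⨅ (A : Set Ω) (_ : MeasurableSet A) (_ : μ A = ENNReal.ofReal t), boundaryMeasure μ A

/-- `Ĩ(t) = min(I(t), I(1-t))`. -/
def tildeIsoProfile [PseudoMetricSpace Ω] [MeasurableSpace Ω] (μ : Measure Ω) (t : ℝ) : ℝ≥0∞ :=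
  min (isoProfile μ t) (isoProfile μ (1 - t))

/-- The `q`-capacity `Cap_q(a,b)`. -/
def capacity [PseudoMetricSpace Ω] [MeasurableSpace Ω] (μ : Measure Ω) (q a b : ℝ) : ℝ≥0∞ :=
  ⨅ (Φ : Ω → ℝ) (_ : LipschitzOnBalls Φ) (_ : ∀ x, Φ x ∈ Icc (0 : ℝ) 1)
    (_ : ENNReal.ofReal a ≤ μ {x | Φ x = 1}) (_ : ENNReal.ofReal (1 - b) ≤ μ {x | Φ x = 0}),
    gradLqNorm μ (ENNReal.ofReal q) Φ

/-- A log-concave function (of the form exp(-ψ) with ψ convex, ℝ ∪ {+∞} valued). -/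
def IsLogConcaveFn {E : Type*} [AddCommGroup E] [Module ℝ E] (f : E → ℝ) : Prop :=
  (∀ x, 0 ≤ f x) ∧
    ∀ x y : E, ∀ a b : ℝ, 0 ≤ a → 0 ≤ b → a + b = 1 → f x ^ a * f y ^ b ≤ f (a • x + b • y)

/-- An absolutely continuous log-concave measure on Euclidean space. -/
def IsLogConcaveMeasure {n : ℕ} (μ : Measure (EuclideanSpace ℝ (Fin n))) : Prop :=
  ∃ f : EuclideanSpace ℝ (Fin n) → ℝ, IsLogConcaveFn f ∧
    μ = volume.withDensity fun x => ENNReal.ofReal (f x)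



namespace MemN
variable {N : ℝ → ℝ} (hN : MemN N)

lemma zero (hN : MemN N) : N 0 = 0 := by
  obtain ⟨t₀, ht₀, hNt₀⟩ := hN.surjOn (mem_Ici.mpr (le_refl 0))
  rcases eq_or_lt_of_le (mem_Ici.mp ht₀ : (0:ℝ) ≤ t₀) with h | h
  · rw [← h] at hNt₀; exact hNt₀
  · exfalso
    have h0 : (0:ℝ) ≤ N 0 := hN.mapsTo (mem_Ici.mpr (le_refl 0))
    have := hN.strictMonoOn (mem_Ici.mpr (le_refl 0)) (mem_Ici.mpr (le_of_lt h)) h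
    rw [hNt₀] at this; linarith

lemma nonneg (hN : MemN N) {t : ℝ} (ht : 0 ≤ t) : 0 ≤ N t := hN.mapsTo ht

lemma monotoneOn (hN : MemN N) : MonotoneOn N (Ici 0) := hN.strictMonoOn.monotoneOn

lemma ninv_eq (hN : MemN N) {y t₀ : ℝ} (ht₀ : 0 ≤ t₀) (hNt₀ : N t₀ = y) :
    ninv N y = t₀ := by
  have hmem : t₀ ∈ {t : ℝ | 0 ≤ t ∧ y ≤ N t} := ⟨ht₀, hNt₀.ge⟩
  apply le_antisymm
  · exact csInf_le ⟨0, fun a ha => ha.1⟩ hmem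
  · apply le_csInf ⟨t₀, hmem⟩
    intro a ha
    by_contra hlt
    push_neg at hlt
    have := hN.strictMonoOn ha.1 ht₀ hlt
    rw [hNt₀] at this
    exact absurd ha.2 (not_le.mpr this)

lemma exists_preimage (hN : MemN N) {y : ℝ} (hy : 0 ≤ y) : ∃ t₀, 0 ≤ t₀ ∧ N t₀ = y :=
  let ⟨t₀, ht₀, hNt₀⟩ := hN.surjOn (show y ∈ Ici 0 from hy); ⟨t₀, ht₀, hNt₀⟩

lemma ninv_nonneg (hN : MemN N) {y : ℝ} (hy : 0 ≤ y) : 0 ≤ ninv N y := by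
  obtain ⟨t₀, ht₀, hNt₀⟩ := hN.exists_preimage hy
  rw [hN.ninv_eq ht₀ hNt₀]; exact ht₀

lemma N_ninv (hN : MemN N) {y : ℝ} (hy : 0 ≤ y) : N (ninv N y) = y := by
  obtain ⟨t₀, ht₀, hNt₀⟩ := hN.exists_preimage hy
  rw [hN.ninv_eq ht₀ hNt₀]; exact hNt₀

lemma ninv_pos (hN : MemN N) {y : ℝ} (hy : 0 < y) : 0 < ninv N y := by
  obtain ⟨t₀, ht₀, hNt₀⟩ := hN.exists_preimage hy.le
  rw [hN.ninv_eq ht₀ hNt₀]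
  rcases eq_or_lt_of_le ht₀ with h | h
  · exfalso; rw [← h, hN.zero] at hNt₀; linarith
  · exact h

lemma ninv_zero (hN : MemN N) : ninv N 0 = 0 := hN.ninv_eq (le_refl 0) hN.zero

lemma le_ninv (hN : MemN N) {a y : ℝ} (ha : 0 ≤ a) (hy : 0 ≤ y) (h : N a ≤ y) :
    a ≤ ninv N y := by
  obtain ⟨t₀, ht₀, hNt₀⟩ := hN.exists_preimage hy
  rw [hN.ninv_eq ht₀ hNt₀]
  by_contra hlt
  push_neg at hlt
  have := hN.strictMonoOn ht₀ ha hlt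
  rw [hNt₀] at this; linarith

lemma nwedge_zero (hN : MemN N) : nwedge N 0 = 0 := by
  simp [nwedge, hN.ninv_zero]

lemma nwedge_nonneg (hN : MemN N) {p : ℝ} (hp : 0 ≤ p) : 0 ≤ nwedge N p := by
  rcases eq_or_lt_of_le hp with h | h
  · rw [← h, hN.nwedge_zero]
  · exact one_div_nonneg.mpr (hN.ninv_nonneg (by positivity))

lemma nwedge_le (hN : MemN N) {p : ℝ} (hp0 : 0 ≤ p) (hp1 : p ≤ 1) :
    nwedge N p ≤ 1 / ninv N 1 := by
  rcases eq_or_lt_of_le hp0 with h | h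
  · rw [← h, hN.nwedge_zero]
    exact one_div_nonneg.mpr (hN.ninv_nonneg zero_le_one)
  · have h1 : (1:ℝ) ≤ 1 / p := one_le_one_div h hp1
    have : ninv N 1 ≤ ninv N (1 / p) := by
      apply hN.le_ninv (hN.ninv_nonneg zero_le_one) (by linarith)
      rw [hN.N_ninv zero_le_one]; exact h1
    exact one_div_le_one_div_of_le (hN.ninv_pos one_pos) this

end MemN


section Grad
variable [MetricSpace Ω]

lemma limsup_bot_real {α : Type*} (u : α → ℝ) : limsup u (⊥ : Filter α) = 0 := by
  have : {a : ℝ | ∀ᶠ x in (⊥ : Filter α), u x ≤ a} = univ := by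
    ext a; simp
  rw [Filter.limsup_eq, this]
  exact Real.sInf_of_not_bddBelow not_bddBelow_univ

lemma continuous_of_LOB {f : Ω → ℝ} (hf : LipschitzOnBalls f) : Continuous f := by
  rw [continuous_iff_continuousAt]
  intro x
  obtain ⟨K, hK⟩ := hf x 1
  exact (hK.continuousOn).continuousAt (Metric.ball_mem_nhds x one_pos)

lemma quot_bounded {f : Ω → ℝ} (hf : LipschitzOnBalls f) (x : Ω) :
    IsBoundedUnder (· ≤ ·) (𝓝[≠] x) (fun y => |f y - f x| / dist y x) := by
  obtain ⟨K, hK⟩ := hf x 1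
  refine ⟨(K : ℝ), eventually_map.mpr ?_⟩
  have hb : Metric.ball x 1 ∈ 𝓝[≠] x :=
    nhdsWithin_le_nhds (Metric.ball_mem_nhds x one_pos)
  filter_upwards [hb, self_mem_nhdsWithin] with y hy hyx
  have hd : dist (f y) (f x) ≤ K * dist y x := by
    have := hK.dist_le_mul y hy x (Metric.mem_ball_self one_pos)
    exact this
  have hdp : (0:ℝ) < dist y x := dist_pos.mpr hyx
  rw [Real.dist_eq] at hd
  calc |f y - f x| / dist y x ≤ (K * dist y x) / dist y x := by gcongr
    _ = K := by field_simp

lemma gradNorm_nonneg {f : Ω → ℝ} (hf : LipschitzOnBalls f) (x : Ω) :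
    0 ≤ gradNorm f x := by
  by_cases hbot : (𝓝[≠] x) = ⊥
  · unfold gradNorm; rw [hbot, limsup_bot_real]
  · have : (𝓝[≠] x).NeBot := ⟨hbot⟩
    apply Filter.le_limsup_of_frequently_le
    · apply Eventually.frequently
      filter_upwards with y
      positivity
    · exact quot_bounded hf x

lemma gradNorm_comp_le {φ : ℝ → ℝ} (hφ : LipschitzWith 1 φ) {f : Ω → ℝ}
    (hf : LipschitzOnBalls f) (x : Ω) :
    gradNorm (fun y => φ (f y)) x ≤ gradNorm f x := by
  by_cases hbot : (𝓝[≠] x) = ⊥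
  · unfold gradNorm; rw [hbot, limsup_bot_real, limsup_bot_real]
  · have : (𝓝[≠] x).NeBot := ⟨hbot⟩
    apply Filter.limsup_le_limsup
    · filter_upwards [self_mem_nhdsWithin] with y hyx
      have hd : |φ (f y) - φ (f x)| ≤ |f y - f x| := by
        have := hφ.dist_le_mul (f y) (f x)
        simpa [Real.dist_eq] using this
      have hdp : (0:ℝ) < dist y x := dist_pos.mpr hyx
      gcongr
    · exact Filter.isCoboundedUnder_le_of_le _ (fun i => by positivity)
    · exact quot_bounded hf x

lemma gradNorm_zero_of_eventually_const {g : Ω → ℝ} (x : Ω)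
    (h : ∀ᶠ y in 𝓝 x, g y = g x) : gradNorm g x = 0 := by
  by_cases hbot : (𝓝[≠] x) = ⊥
  · unfold gradNorm; rw [hbot, limsup_bot_real]
  · have : (𝓝[≠] x).NeBot := ⟨hbot⟩
    unfold gradNorm
    have he : ∀ᶠ y in 𝓝[≠] x, |g y - g x| / dist y x = 0 := by
      filter_upwards [nhdsWithin_le_nhds h] with y hy
      simp [hy]
    rw [Filter.limsup_congr he]
    exact Filter.limsup_const 0

lemma gradNorm_neg (f : Ω → ℝ) : gradNorm (fun y => -f y) = gradNorm f := by
  funext x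
  unfold gradNorm
  congr 1
  funext y
  rw [show -f y - -f x = -(f y - f x) by ring, abs_neg]

lemma LOB_comp {φ : ℝ → ℝ} (hφ : LipschitzWith 1 φ) {f : Ω → ℝ}
    (hf : LipschitzOnBalls f) : LipschitzOnBalls (fun y => φ (f y)) := by
  intro x r
  obtain ⟨K, hK⟩ := hf x r
  exact ⟨1 * K, hφ.comp_lipschitzOnWith hK⟩

end Grad

lemma abs_min_sub_min_le_abs' (a b c : ℝ) : |min a c - min b c| ≤ |a - b| := by
  have h1 : min a c = -max (-a) (-c) := by
    rcases le_total a c with h | h <;> simp [min_eq_left, min_eq_right, max_eq_left, max_eq_right, h, neg_le_neg h]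
  have h2 : min b c = -max (-b) (-c) := by
    rcases le_total b c with h | h <;> simp [h, neg_le_neg h]
  rw [h1, h2, show -max (-a) (-c) - -max (-b) (-c) = -(max (-a) (-c) - max (-b) (-c)) by ring, abs_neg]
  calc |max (-a) (-c) - max (-b) (-c)| ≤ |(-a) - (-b)| := abs_max_sub_max_le_abs (-a) (-b) (-c)
    _ = |a - b| := by rw [show (-a) - (-b) = -(a-b) by ring, abs_neg]
lemma lip_sub_const (c : ℝ) : LipschitzWith 1 (fun t : ℝ => t - c) :=
  LipschitzWith.of_dist_le_mul fun x y => by simp [Real.dist_eq]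
lemma lip_max_const (c : ℝ) : LipschitzWith 1 (fun t : ℝ => max t c) :=
  LipschitzWith.of_dist_le_mul fun x y => by
    simpa [Real.dist_eq] using abs_max_sub_max_le_abs x y c
lemma lip_min_const (c : ℝ) : LipschitzWith 1 (fun t : ℝ => min t c) :=
  LipschitzWith.of_dist_le_mul fun x y => by
    simpa [Real.dist_eq] using abs_min_sub_min_le_abs' x y c
lemma lip_comp' {φ ψ : ℝ → ℝ} (hφ : LipschitzWith 1 φ) (hψ : LipschitzWith 1 ψ) :
    LipschitzWith 1 (fun t => φ (ψ t)) := by simpa [Function.comp_def] using hφ.comp hψ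

section Main
variable {Ω : Type*} [MetricSpace Ω] [MeasurableSpace Ω] [BorelSpace Ω]
  (μ : Measure Ω) [IsProbabilityMeasure μ] {N : ℝ → ℝ}

lemma measurableSet_abs_le {h : Ω → ℝ} (hc : Continuous h) (t : ℝ) :
    MeasurableSet {x | t ≤ |h x|} :=
  (isClosed_le continuous_const (continuous_abs.comp hc)).measurableSet

/-- Chebyshev: every element of the weak Orlicz set is at most any admissible `v`. -/
lemma cheb (hN : MemN N) {h : Ω → ℝ} (hc : Continuous h) {v : ℝ} (hv : 0 < v)
    (hS : ∫⁻ x, ENNReal.ofReal (N (|h x| / v)) ∂μ ≤ 1) {t : ℝ} (ht : 0 < t) :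
    nwedge N ((μ {x | t ≤ |h x|}).toReal) * t ≤ v := by
  set p := μ {x | t ≤ |h x|} with hp_def
  by_cases hp : p = 0
  · rw [hp]; simpa [hN.nwedge_zero] using hv.le
  · have hptop : p ≠ ⊤ := measure_ne_top μ _
    set p' := p.toReal with hp'_def
    have hp' : 0 < p' := ENNReal.toReal_pos hp hptop
    have hNtv : 0 ≤ N (t / v) := hN.nonneg (by positivity)
    have hmark : ENNReal.ofReal (N (t / v)) * p ≤ 1 := by
      calc ENNReal.ofReal (N (t / v)) * p
          = ∫⁻ x, {x | t ≤ |h x|}.indicator (fun _ => ENNReal.ofReal (N (t / v))) x ∂μ :=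
            (lintegral_indicator_const (measurableSet_abs_le hc t) _).symm
        _ ≤ ∫⁻ x, ENNReal.ofReal (N (|h x| / v)) ∂μ := by
            apply lintegral_mono
            intro x
            by_cases hx : x ∈ {x | t ≤ |h x|}
            · simp only [indicator_of_mem hx]
              apply ENNReal.ofReal_le_ofReal
              exact hN.monotoneOn (mem_Ici.mpr (by positivity))
                (mem_Ici.mpr (by positivity)) (by gcongr; exact hx)
            · simp [indicator_of_notMem hx]
        _ ≤ 1 := hS
    have hmark' : N (t / v) * p' ≤ 1 := by
      rw [← ENNReal.ofReal_toReal hptop, ← ENNReal.ofReal_mul hNtv] at hmark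
      exact ENNReal.ofReal_le_one.mp hmark
    have hNle : N (t / v) ≤ 1 / p' := by
      rw [le_div_iff₀ hp']; exact hmark'
    have hβpos : 0 < ninv N (1 / p') := hN.ninv_pos (by positivity)
    have hβ : t / v ≤ ninv N (1 / p') := hN.le_ninv (by positivity) (by positivity) hNle
    show (1 / ninv N (1 / p')) * t ≤ v
    rw [one_div, inv_mul_eq_div, div_le_iff₀ hβpos]
    rw [div_le_iff₀ hv] at hβ
    linarith [hβ]

lemma bddAbove_weakSet (hN : MemN N) {h : Ω → ℝ} {Λ : ℝ} (hΛ : 0 < Λ)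
    (hb : ∀ x, |h x| ≤ Λ) :
    BddAbove {r : ℝ | ∃ t : ℝ, 0 < t ∧ r = nwedge N ((μ {x | t ≤ |h x|}).toReal) * t} := by
  refine ⟨(1 / ninv N 1) * Λ, ?_⟩
  rintro r ⟨t, ht, rfl⟩
  have hninv : 0 ≤ 1 / ninv N 1 := one_div_nonneg.mpr (hN.ninv_nonneg zero_le_one)
  by_cases htΛ : t ≤ Λ
  · have hp1 : (μ {x | t ≤ |h x|}).toReal ≤ 1 := by
      calc (μ {x | t ≤ |h x|}).toReal ≤ (μ univ).toReal :=
            ENNReal.toReal_mono (measure_ne_top μ univ) (measure_mono (subset_univ _))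
        _ = 1 := by simp
    exact mul_le_mul (hN.nwedge_le ENNReal.toReal_nonneg hp1) htΛ ht.le hninv
  · have hempty : {x | t ≤ |h x|} = ∅ := by
      ext x; simp only [mem_setOf_eq, mem_empty_iff_false, iff_false, not_le]
      exact lt_of_le_of_lt (hb x) (not_le.mp htΛ)
    rw [hempty]
    simp only [measure_empty, ENNReal.toReal_zero, hN.nwedge_zero, zero_mul]
    exact mul_nonneg hninv hΛ.le

/-- Part 1: strong Orlicz–Sobolev implies weak Orlicz–Sobolev with the same constant. -/
lemma part1 (hN : MemN N) (q : ℝ) (D₁ : ℝ) (hD : 0 < D₁)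
    (hyp : ∀ f : Ω → ℝ, LipschitzOnBalls f → ∀ m : ℝ, IsMedian μ f m →
      ENNReal.ofReal (D₁ * orliczNorm μ N fun x => f x - m) ≤
        gradLqNorm μ (ENNReal.ofReal q) f)
    (f : Ω → ℝ) (hf : LipschitzOnBalls f) (m : ℝ) (hm : IsMedian μ f m) :
    ENNReal.ofReal (D₁ * weakOrliczNorm μ N fun x => f x - m) ≤
      gradLqNorm μ (ENNReal.ofReal q) f := by
  set G := gradLqNorm μ (ENNReal.ofReal q) f with hG_def
  by_cases hGtop : G = ⊤
  · rw [hGtop]; exact le_top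
  -- bound each element of the weak set
  have hWub : ∀ r ∈ {r : ℝ | ∃ t : ℝ, 0 < t ∧
      r = nwedge N ((μ {x | t ≤ |f x - m|}).toReal) * t}, r ≤ G.toReal / D₁ := by
    rintro r ⟨t, ht, rfl⟩
    set ρ := max t 1 with hρ_def
    have hρ1 : (1:ℝ) ≤ ρ := le_max_right t 1
    have hρ0 : (0:ℝ) < ρ := by linarith
    have htρ : t ≤ ρ := le_max_left t 1
    set φ := fun a : ℝ => max (min a (m + ρ)) (m - ρ) with hφ_def
    have hφlip : LipschitzWith 1 φ := lip_comp' (lip_max_const (m - ρ)) (lip_min_const (m + ρ))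
    set g := fun x => φ (f x) with hg_def
    have hg : LipschitzOnBalls g := LOB_comp hφlip hf
    have hgm : IsMedian μ g m := by
      constructor
      · refine le_trans hm.1 (measure_mono ?_)
        intro x hx
        simp only [mem_setOf_eq] at hx ⊢
        exact le_trans (le_min hx (by linarith)) (le_max_left _ _)
      · refine le_trans hm.2 (measure_mono ?_)
        intro x hx
        simp only [mem_setOf_eq] at hx ⊢
        exact max_le (le_trans (min_le_left _ _) hx) (by linarith)
    have hgabs : ∀ x, |g x - m| ≤ ρ := by
      intro x
      rw [abs_le]
      constructor
      · have : m - ρ ≤ g x := le_max_right _ _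
        linarith
      · have : g x ≤ m + ρ := max_le (le_trans (min_le_right _ _) (le_refl _)) (by linarith)
        linarith
    have hset : ∀ t' : ℝ, 0 < t' → t' ≤ ρ →
        {x | t' ≤ |g x - m|} = {x | t' ≤ |f x - m|} := by
      intro t' ht' ht'ρ
      ext x
      simp only [mem_setOf_eq]
      constructor
      · intro hx
        refine le_trans hx ?_
        have hφm : φ m = m := by
          simp only [hφ_def]
          rw [min_eq_left (by linarith), max_eq_left (by linarith)]
        have := hφlip.dist_le_mul (f x) m
        simp only [Real.dist_eq, NNReal.coe_one, ENNReal.coe_one, one_mul] at this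
        calc |g x - m| = |φ (f x) - φ m| := by rw [hφm]
          _ ≤ |f x - m| := this
      · intro hx
        rcases le_total m (f x) with hfm | hfm
        · have hfx : t' ≤ f x - m := by
            rwa [abs_of_nonneg (by linarith)] at hx
          have hgx : g x = min (f x) (m + ρ) := by
            simp only [hg_def, hφ_def]
            rw [max_eq_left (le_min (by linarith) (by linarith))]
          have : t' ≤ g x - m := by
            rw [hgx]
            rcases le_total (f x) (m + ρ) with h | h
            · rw [min_eq_left h]; linarith
            · rw [min_eq_right h]; linarith
          exact le_trans this (le_abs_self _)
        · have hfx : t' ≤ m - f x := by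
            rw [abs_of_nonpos (by linarith)] at hx; linarith
          have hgx : g x = max (f x) (m - ρ) := by
            simp only [hg_def, hφ_def]
            rw [min_eq_left (by linarith)]
          have : t' ≤ m - g x := by
            rw [hgx]
            rcases le_total (f x) (m - ρ) with h | h
            · rw [max_eq_right h]; linarith
            · rw [max_eq_left h]; linarith
          calc t' ≤ m - g x := this
            _ ≤ |g x - m| := by
              rw [abs_sub_comm]; exact le_abs_self _
    have hgrad : gradLqNorm μ (ENNReal.ofReal q) g ≤ G := by
      rw [hG_def]
      apply eLpNorm_mono
      intro x
      rw [Real.norm_eq_abs, Real.norm_eq_abs, abs_of_nonneg (gradNorm_nonneg hg x),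
        abs_of_nonneg (gradNorm_nonneg hf x)]
      exact gradNorm_comp_le hφlip hf x
    -- admissible v₀ for g - m
    obtain ⟨s₁, hs₁0, hs₁⟩ := hN.exists_preimage zero_le_one
    have hs₁pos : 0 < s₁ := by
      rcases eq_or_lt_of_le hs₁0 with h | h
      · exfalso; rw [← h, hN.zero] at hs₁; norm_num at hs₁
      · exact h
    set v₀ := ρ / s₁ with hv₀_def
    have hv₀ : 0 < v₀ := by positivity
    have hv₀mem : 0 < v₀ ∧ ∫⁻ x, ENNReal.ofReal (N (|g x - m| / v₀)) ∂μ ≤ 1 := by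
      refine ⟨hv₀, ?_⟩
      calc ∫⁻ x, ENNReal.ofReal (N (|g x - m| / v₀)) ∂μ
          ≤ ∫⁻ _x, ENNReal.ofReal (N s₁) ∂μ := by
            apply lintegral_mono
            intro x
            apply ENNReal.ofReal_le_ofReal
            apply hN.monotoneOn (mem_Ici.mpr (by positivity)) (mem_Ici.mpr hs₁0)
            rw [show s₁ = ρ / v₀ by rw [hv₀_def]; field_simp]
            gcongr
            exact hgabs x
        _ = 1 := by rw [lintegral_const, measure_univ, mul_one, hs₁, ENNReal.ofReal_one]
    have hrle : nwedge N ((μ {x | t ≤ |f x - m|}).toReal) * t ≤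
        orliczNorm μ N (fun x => g x - m) := by
      apply le_csInf ⟨v₀, hv₀mem⟩
      rintro v ⟨hv, hSv⟩
      rw [← hset t ht htρ]
      exact cheb μ hN ((continuous_of_LOB hg).sub continuous_const) hv hSv ht
    have h1 : ENNReal.ofReal (D₁ * (nwedge N ((μ {x | t ≤ |f x - m|}).toReal) * t)) ≤ G := by
      calc ENNReal.ofReal (D₁ * (nwedge N ((μ {x | t ≤ |f x - m|}).toReal) * t))
          ≤ ENNReal.ofReal (D₁ * orliczNorm μ N fun x => g x - m) := by
            apply ENNReal.ofReal_le_ofReal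
            exact mul_le_mul_of_nonneg_left hrle hD.le
        _ ≤ gradLqNorm μ (ENNReal.ofReal q) g := hyp g hg m hgm
        _ ≤ G := hgrad
    have h2 : D₁ * (nwedge N ((μ {x | t ≤ |f x - m|}).toReal) * t) ≤ G.toReal :=
      (ENNReal.ofReal_le_iff_le_toReal hGtop).mp h1
    rw [le_div_iff₀ hD, mul_comm]
    exact h2
  have hW : weakOrliczNorm μ N (fun x => f x - m) ≤ G.toReal / D₁ :=
    Real.sSup_le hWub (div_nonneg ENNReal.toReal_nonneg hD.le)
  have : D₁ * weakOrliczNorm μ N (fun x => f x - m) ≤ G.toReal := by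
    rw [← le_div_iff₀' hD]
    exact hW
  exact (ENNReal.ofReal_le_iff_le_toReal hGtop).mpr this

end Main



section Part2
variable {Ω : Type*} [MetricSpace Ω] [MeasurableSpace Ω] [BorelSpace Ω]
  (μ : Measure Ω) [IsProbabilityMeasure μ] {N : ℝ → ℝ}

lemma pos_side (hN : MemN N) {q : ℝ} (hq : 1 ≤ q)
    (hNq : MonotoneOn (fun t => N t ^ (1 / q) / t) (Ioi (0 : ℝ)))
    {D₂ : ℝ} (hD : 0 < D₂)
    (hyp : ∀ g : Ω → ℝ, LipschitzOnBalls g → ∀ m' : ℝ, IsMedian μ g m' →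
      ENNReal.ofReal (D₂ * weakOrliczNorm μ N fun x => g x - m') ≤
        gradLqNorm μ (ENNReal.ofReal q) g)
    (f : Ω → ℝ) (hf : LipschitzOnBalls f) (m : ℝ) (hm : IsMedian μ f m)
    {s : ℝ} (hs1 : 1 < s)
    (hsnull : ∀ k : ℤ, μ {x | max (f x - m) 0 = s * 2 ^ k} = 0)
    {v : ℝ} (hv : 0 < v)
    (hA : gradLqNorm μ (ENNReal.ofReal q) f ≤ ENNReal.ofReal (D₂ * v / 4)) :
    ∫⁻ x in {x | 0 < f x - m}, ENNReal.ofReal (N ((f x - m) / v)) ∂μ ≤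
      (∫⁻ x in {x | 0 < f x - m}, (‖gradNorm f x‖₊ : ℝ≥0∞) ^ q ∂μ) /
        ENNReal.ofReal (D₂ * v / 4) ^ q := by
  have hq0 : (0:ℝ) < q := lt_of_lt_of_le one_pos hq
  have hs0 : (0:ℝ) < s := lt_trans one_pos hs1
  set w := fun x => max (f x - m) 0 with hw_def
  have hw_cont : Continuous w := (continuous_of_LOB hf).sub continuous_const |>.max continuous_const
  set lv : ℤ → ℝ := fun k => s * 2 ^ k with hlv_def
  have hlv : ∀ k, 0 < lv k := fun k => by positivity
  have hlv_mono : ∀ {k l : ℤ}, k ≤ l → lv k ≤ lv l := fun {k l} h =>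
    mul_le_mul_of_nonneg_left (zpow_le_zpow_right₀ one_le_two h) hs0.le
  set P : ℤ → Set Ω := fun k => {x | lv k ≤ w x ∧ w x < lv (k + 1)} with hP_def
  set E : ℤ → Set Ω := fun k => {x | lv k ≤ w x ∧ w x ≤ lv (k + 1)} with hE_def
  have hPm : ∀ k, MeasurableSet (P k) := fun k => by
    have : P k = w ⁻¹' (Ico (lv k) (lv (k + 1))) := rfl
    rw [this]
    exact hw_cont.measurable measurableSet_Ico
  have hEm : ∀ k, MeasurableSet (E k) := fun k => by
    have : E k = w ⁻¹' (Icc (lv k) (lv (k + 1))) := rfl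
    rw [this]
    exact hw_cont.measurable measurableSet_Icc
  have hPdisj : Pairwise (Function.onFun Disjoint P) := by
    intro k l hkl
    rcases lt_or_gt_of_ne hkl with h | h
    · exact Set.disjoint_left.mpr fun x hxk hxl =>
        absurd (lt_of_lt_of_le hxk.2 (le_trans (hlv_mono (by omega)) hxl.1)) (lt_irrefl _)
    · exact Set.disjoint_left.mpr fun x hxk hxl =>
        absurd (lt_of_lt_of_le hxl.2 (le_trans (hlv_mono (by omega)) hxk.1)) (lt_irrefl _)
  have hU : {x | 0 < f x - m} = ⋃ k, P k := by
    ext x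
    simp only [mem_setOf_eq, mem_iUnion]
    constructor
    · intro hx
      have hwx : 0 < w x := lt_max_of_lt_left hx
      obtain ⟨n, hn⟩ := exists_mem_Ico_zpow (div_pos hwx hs0) one_lt_two
      refine ⟨n, ?_, ?_⟩
      · rw [show lv n = s * 2 ^ n from rfl]
        calc s * 2 ^ n ≤ s * (w x / s) := by
              apply mul_le_mul_of_nonneg_left hn.1 hs0.le
          _ = w x := by field_simp
      · calc w x = s * (w x / s) := by field_simp
          _ < s * 2 ^ (n + 1) := by
              apply mul_lt_mul_of_pos_left hn.2 hs0
    · rintro ⟨k, hk1, _⟩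
      have : 0 < w x := lt_of_lt_of_le (hlv k) hk1
      rcases lt_max_iff.mp this with h | h
      · exact h
      · exact absurd h (lt_irrefl 0)
  set p : ℝ≥0∞ := ENNReal.ofReal q with hp_def
  have hp0 : p ≠ 0 := by
    simp only [hp_def, ne_eq, ENNReal.ofReal_eq_zero, not_le]; exact hq0
  have hptop : p ≠ ⊤ := ENNReal.ofReal_ne_top
  have hpreal : p.toReal = q := ENNReal.toReal_ofReal hq0.le
  set G : Ω → ℝ≥0∞ := fun x => (‖gradNorm f x‖₊ : ℝ≥0∞) ^ q with hG_def
  have hpow : ∀ ν : Measure Ω, eLpNorm (gradNorm f) p ν ^ q = ∫⁻ x, G x ∂ν := by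
    intro ν
    simp only [hG_def, ← enorm_eq_nnnorm]
    rw [eLpNorm_eq_lintegral_rpow_enorm_toReal hp0 hptop, hpreal, ← ENNReal.rpow_mul,
      one_div_mul_cancel hq0.ne', ENNReal.rpow_one]
  set K : ℝ≥0∞ := ENNReal.ofReal (D₂ * v / 4) ^ q with hK_def
  have hDv4 : (0:ℝ) < D₂ * v / 4 := by positivity
  have hK0 : K ≠ 0 := by
    rw [hK_def]
    exact (ENNReal.rpow_pos (ENNReal.ofReal_pos.mpr hDv4) ENNReal.ofReal_ne_top).ne'
  have hKtop : K ≠ ⊤ := by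
    rw [hK_def]
    exact ENNReal.rpow_ne_top_of_nonneg hq0.le ENNReal.ofReal_ne_top
  set c : ℤ → ℝ≥0∞ := fun k => ∫⁻ x in E k, G x ∂μ with hc_def
  have hcK : ∀ k, c k ≤ K := by
    intro k
    calc c k ≤ ∫⁻ x, G x ∂μ := lintegral_mono' Measure.restrict_le_self le_rfl
      _ = gradLqNorm μ p f ^ q := (hpow μ).symm
      _ ≤ K := ENNReal.rpow_le_rpow hA hq0.le
  -- per-piece estimate
  have hterm : ∀ k : ℤ, ∫⁻ x in P k, ENNReal.ofReal (N ((f x - m) / v)) ∂μ ≤ c (k - 1) / K := by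
    intro k
    by_cases hπ : μ {x | lv k ≤ w x} = 0
    · have hP0 : μ (P k) = 0 := measure_mono_null (fun x hx => hx.1) hπ
      rw [Measure.restrict_eq_zero.mpr hP0, lintegral_zero_measure]
      exact zero_le
    · set π := μ {x | lv k ≤ w x} with hπ_def
      have hπtop : π ≠ ⊤ := measure_ne_top μ _
      set π' := π.toReal with hπ'_def
      have hπ' : 0 < π' := ENNReal.toReal_pos hπ hπtop
      set β := ninv N (1 / π') with hβ_def
      have hβ : 0 < β := hN.ninv_pos (by positivity)
      have hNβ : N β = 1 / π' := hN.N_ninv (by positivity)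
      set t₀ := lv (k - 1) with ht₀_def
      have ht₀ : 0 < t₀ := hlv (k - 1)
      have hstep : ∀ j : ℤ, lv (j + 1) = 2 * lv j := by
        intro j
        simp only [hlv_def]
        rw [zpow_add_one₀ (two_ne_zero)]
        ring
      have hlv2 : lv k = 2 * t₀ := by
        have := hstep (k - 1)
        rw [sub_add_cancel] at this
        rw [this, ht₀_def]
      have hlv4 : lv (k + 1) = 4 * t₀ := by
        rw [hstep k, hlv2]
        ring
      set ψ : ℝ → ℝ := fun a => min (max (max (a - m) 0 - t₀) 0) t₀ with hψ_def
      have hψ : LipschitzWith 1 ψ :=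
        lip_comp' (lip_min_const t₀) (lip_comp' (lip_max_const 0)
          (lip_comp' (lip_sub_const t₀) (lip_comp' (lip_max_const 0) (lip_sub_const m))))
      set wk := fun x => ψ (f x) with hwk_def
      have hwk : LipschitzOnBalls wk := LOB_comp hψ hf
      have hwk_eq : ∀ x, wk x = min (max (w x - t₀) 0) t₀ := fun x => rfl
      have hwk_nonneg : ∀ x, 0 ≤ wk x := fun x => le_min (le_max_right _ _) ht₀.le
      have hwk_le : ∀ x, wk x ≤ t₀ := fun x => min_le_right _ _
      have hwkmed : IsMedian μ wk 0 := by
        constructor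
        · have : {x | (0:ℝ) ≤ wk x} = univ := eq_univ_of_forall fun x => hwk_nonneg x
          rw [this, measure_univ]
          norm_num
        · refine le_trans hm.2 (measure_mono ?_)
          intro x hx
          simp only [mem_setOf_eq] at hx ⊢
          have hwx : w x = 0 := max_eq_right (by linarith)
          rw [hwk_eq x, hwx]
          rw [max_eq_right (by linarith), min_eq_left ht₀.le]
      have hlevel : {x | t₀ ≤ |wk x - 0|} = {x | lv k ≤ w x} := by
        ext x
        simp only [mem_setOf_eq, sub_zero, abs_of_nonneg (hwk_nonneg x)]
        rw [hwk_eq x, hlv2]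
        constructor
        · intro h
          have h1 : t₀ ≤ max (w x - t₀) 0 := (le_min_iff.mp h).1
          rcases le_max_iff.mp h1 with h2 | h2
          · linarith
          · linarith
        · intro h
          exact le_min (le_max_of_le_left (by linarith)) le_rfl
      have hweak := hyp wk hwk 0 hwkmed
      have hbdd : BddAbove {r : ℝ | ∃ t : ℝ, 0 < t ∧
          r = nwedge N ((μ {x | t ≤ |wk x - 0|}).toReal) * t} := by
        apply bddAbove_weakSet μ hN ht₀
        intro x
        rw [sub_zero, abs_of_nonneg (hwk_nonneg x)]
        exact hwk_le x
      have hmem : nwedge N π' * t₀ ∈ {r : ℝ | ∃ t : ℝ, 0 < t ∧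
          r = nwedge N ((μ {x | t ≤ |wk x - 0|}).toReal) * t} :=
        ⟨t₀, ht₀, by rw [hlevel]⟩
      have hle_sup : nwedge N π' * t₀ ≤ weakOrliczNorm μ N (fun x => wk x - 0) :=
        le_csSup hbdd hmem
      have chainA : ENNReal.ofReal (D₂ * (nwedge N π' * t₀)) ≤ gradLqNorm μ p wk :=
        le_trans (ENNReal.ofReal_le_ofReal (mul_le_mul_of_nonneg_left hle_sup hD.le)) hweak
      have hgradwk : gradLqNorm μ p wk ≤ eLpNorm ((E (k - 1)).indicator (gradNorm f)) p μ := by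
        apply eLpNorm_mono
        intro x
        by_cases hxE : x ∈ E (k - 1)
        · rw [indicator_of_mem hxE, Real.norm_eq_abs, Real.norm_eq_abs,
            abs_of_nonneg (gradNorm_nonneg hwk x), abs_of_nonneg (gradNorm_nonneg hf x)]
          exact gradNorm_comp_le hψ hf x
        · have hwk0 : gradNorm wk x = 0 := by
            apply gradNorm_zero_of_eventually_const
            have hxE' : w x < t₀ ∨ lv k < w x := by
              by_contra hcon
              push_neg at hcon
              apply hxE
              refine ⟨hcon.1, ?_⟩
              have : lv (k - 1 + 1) = lv k := by norm_num
              rw [this]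
              exact hcon.2
            rcases hxE' with hlt | hgt
            · have hev : ∀ᶠ y in nhds x, w y < t₀ :=
                Filter.Tendsto.eventually_lt_const hlt (hw_cont.tendsto x)
              filter_upwards [hev] with y hy
              rw [hwk_eq y, hwk_eq x, max_eq_right (by linarith), min_eq_left ht₀.le,
                max_eq_right (by
                  have : w x < t₀ := hlt
                  linarith), min_eq_left ht₀.le]
            · have hev : ∀ᶠ y in nhds x, lv k < w y :=
                Filter.Tendsto.eventually_const_lt hgt (hw_cont.tendsto x)
              filter_upwards [hev] with y hy
              rw [hwk_eq y, hwk_eq x]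
              rw [hlv2] at hy hgt
              rw [min_eq_right (le_max_of_le_left (by linarith)),
                min_eq_right (le_max_of_le_left (by linarith))]
          rw [hwk0, indicator_of_notMem hxE]
      have hck : eLpNorm ((E (k - 1)).indicator (gradNorm f)) p μ ^ q = c (k - 1) := by
        rw [eLpNorm_indicator_eq_eLpNorm_restrict (hEm (k - 1)), hpow]
      have chainA2 : ENNReal.ofReal (D₂ * (nwedge N π' * t₀)) ^ q ≤ c (k - 1) := by
        rw [← hck]
        exact ENNReal.rpow_le_rpow (le_trans chainA hgradwk) hq0.le
      have chainB : ENNReal.ofReal (D₂ * (nwedge N π' * t₀)) ≤ ENNReal.ofReal (D₂ * v / 4) := by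
        have h1 : ENNReal.ofReal (D₂ * (nwedge N π' * t₀)) ^ q ≤ K := le_trans chainA2 (hcK _)
        have h2 := ENNReal.rpow_le_rpow h1 (le_of_lt (one_div_pos.mpr hq0))
        rwa [← ENNReal.rpow_mul, mul_one_div, div_self hq0.ne', ENNReal.rpow_one,
          hK_def, ← ENNReal.rpow_mul, mul_one_div, div_self hq0.ne', ENNReal.rpow_one] at h2
      have hnwt : nwedge N π' * t₀ = t₀ / β := by
        rw [nwedge, hβ_def, one_div_mul_eq_div]
      have hreal : D₂ * (t₀ / β) ≤ D₂ * v / 4 := by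
        rw [← hnwt]
        exact (ENNReal.ofReal_le_ofReal_iff hDv4.le).mp chainB
      have h4t : 4 * t₀ ≤ v * β := by
        have : t₀ / β ≤ v / 4 := by
          have := le_of_mul_le_mul_left (by linarith [hreal] : D₂ * (t₀ / β) ≤ D₂ * (v / 4)) hD
          exact this
        rw [div_le_div_iff₀ hβ (by norm_num : (0:ℝ) < 4)] at this
        linarith
      set z := lv (k + 1) / v with hz_def
      have hz : 0 < z := div_pos (hlv _) hv
      have hzβ : z ≤ β := by
        rw [hz_def, hlv4, div_le_iff₀ hv]
        linarith
      have hNz : N z ≤ (z / β) ^ q * (1 / π') := by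
        have h1 := hNq (mem_Ioi.mpr hz) (mem_Ioi.mpr hβ) hzβ
        simp only at h1
        have h2 : N z ^ (1 / q) ≤ N β ^ (1 / q) / β * z := (div_le_iff₀ hz).mp h1
        have h3 : (N z ^ (1 / q)) ^ q ≤ (N β ^ (1 / q) / β * z) ^ q := by
          apply Real.rpow_le_rpow (Real.rpow_nonneg (hN.nonneg hz.le) _) h2 hq0.le
        rw [← Real.rpow_mul (hN.nonneg hz.le), one_div_mul_cancel hq0.ne',
          Real.rpow_one] at h3
        calc N z ≤ (N β ^ (1 / q) / β * z) ^ q := h3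
          _ = (N β ^ (1 / q)) ^ q * (z / β) ^ q := by
              rw [show N β ^ (1 / q) / β * z = N β ^ (1 / q) * (z / β) by ring,
                Real.mul_rpow (Real.rpow_nonneg (hN.nonneg hβ.le) _) (by positivity)]
          _ = (z / β) ^ q * (1 / π') := by
              rw [← Real.rpow_mul (hN.nonneg hβ.le), one_div_mul_cancel hq0.ne',
                Real.rpow_one, hNβ]
              ring
      have hstep1 : ∫⁻ x in P k, ENNReal.ofReal (N ((f x - m) / v)) ∂μ ≤
          ENNReal.ofReal (N z) * μ (P k) := by
        calc ∫⁻ x in P k, ENNReal.ofReal (N ((f x - m) / v)) ∂μ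
            ≤ ∫⁻ _x in P k, ENNReal.ofReal (N z) ∂μ := by
              apply setLIntegral_mono measurable_const
              intro x hx
              apply ENNReal.ofReal_le_ofReal
              have hwx : 0 < w x := lt_of_lt_of_le (hlv k) hx.1
              have hfx : f x - m = w x := by
                rcases le_or_gt 0 (f x - m) with h | h
                · exact (max_eq_left h).symm
                · exfalso
                  have : w x = 0 := max_eq_right h.le
                  rw [this] at hwx
                  exact lt_irrefl 0 hwx
              rw [hfx]
              apply hN.monotoneOn (mem_Ici.mpr (by positivity)) (mem_Ici.mpr hz.le)
              rw [hz_def]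
              gcongr
              exact hx.2.le
          _ = ENNReal.ofReal (N z) * μ (P k) := setLIntegral_const _ _
      have hμP : μ (P k) ≤ π := measure_mono fun x hx => hx.1
      have hstep2 : ENNReal.ofReal (N z) * μ (P k) ≤ ENNReal.ofReal ((z / β) ^ q) := by
        calc ENNReal.ofReal (N z) * μ (P k)
            ≤ ENNReal.ofReal ((z / β) ^ q * (1 / π')) * π :=
              mul_le_mul' (ENNReal.ofReal_le_ofReal hNz) hμP
          _ = ENNReal.ofReal ((z / β) ^ q) := by
              rw [← ENNReal.ofReal_toReal hπtop, ← hπ'_def,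
                ← ENNReal.ofReal_mul (by positivity)]
              congr 1
              field_simp
      have hstep3 : ENNReal.ofReal ((z / β) ^ q) ≤ c (k - 1) / K := by
        rw [ENNReal.le_div_iff_mul_le (Or.inl hK0) (Or.inl hKtop)]
        calc ENNReal.ofReal ((z / β) ^ q) * K
            = ENNReal.ofReal ((z / β * (D₂ * v / 4)) ^ q) := by
              rw [hK_def, ENNReal.ofReal_rpow_of_nonneg hDv4.le hq0.le,
                ← ENNReal.ofReal_mul (by positivity),
                ← Real.mul_rpow (by positivity) hDv4.le]
          _ = ENNReal.ofReal ((D₂ * (nwedge N π' * t₀)) ^ q) := by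
              congr 2
              rw [hnwt, hz_def, hlv4]
              field_simp
          _ = ENNReal.ofReal (D₂ * (nwedge N π' * t₀)) ^ q := by
              rw [ENNReal.ofReal_rpow_of_nonneg ?_ hq0.le]
              rw [hnwt]
              positivity
          _ ≤ c (k - 1) := chainA2
      exact le_trans hstep1 (le_trans hstep2 hstep3)
  -- assemble
  have hEP : ∀ k : ℤ, c k = ∫⁻ x in P k, G x ∂μ := by
    intro k
    rw [hc_def]
    simp only
    congr 1
    apply Measure.restrict_congr_set
    apply ae_eq_set.mpr
    constructor
    · apply measure_mono_null ?_ (hsnull (k + 1))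
      intro x hx
      simp only [mem_setOf_eq]
      rcases hx with ⟨⟨h1, h2⟩, h3⟩
      simp only [hP_def, mem_setOf_eq, not_and, not_lt] at h3
      exact le_antisymm h2 (h3 h1)
    · have : P k \ E k = ∅ := by
        apply diff_eq_empty.mpr
        intro x hx
        exact ⟨hx.1, hx.2.le⟩
      rw [this, measure_empty]
  have hdecompN : ∫⁻ x in {x | 0 < f x - m}, ENNReal.ofReal (N ((f x - m) / v)) ∂μ =
      ∑' k : ℤ, ∫⁻ x in P k, ENNReal.ofReal (N ((f x - m) / v)) ∂μ := by
    rw [hU, Measure.restrict_iUnion hPdisj hPm, lintegral_sum_measure]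
  have hdecompG : ∫⁻ x in {x | 0 < f x - m}, G x ∂μ = ∑' k : ℤ, ∫⁻ x in P k, G x ∂μ := by
    rw [hU, Measure.restrict_iUnion hPdisj hPm, lintegral_sum_measure]
  calc ∫⁻ x in {x | 0 < f x - m}, ENNReal.ofReal (N ((f x - m) / v)) ∂μ
      = ∑' k : ℤ, ∫⁻ x in P k, ENNReal.ofReal (N ((f x - m) / v)) ∂μ := hdecompN
    _ ≤ ∑' k : ℤ, c (k - 1) / K := ENNReal.tsum_le_tsum hterm
    _ = (∑' k : ℤ, c (k - 1)) / K := by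
        simp only [div_eq_mul_inv]
        exact ENNReal.tsum_mul_right
    _ = (∑' k : ℤ, c k) / K := by
        congr 1
        simpa using (Equiv.subRight (1:ℤ)).tsum_eq c
    _ = (∑' k : ℤ, ∫⁻ x in P k, G x ∂μ) / K := by
        congr 1
        exact tsum_congr hEP
    _ = (∫⁻ x in {x | 0 < f x - m}, G x ∂μ) / K := by rw [hdecompG]


lemma lip_neg : LipschitzWith 1 (fun a : ℝ => -a) :=
  LipschitzWith.of_dist_le_mul fun x y => by simp [dist_neg_neg]

lemma exists_good_scale (μ : Measure Ω) [IsProbabilityMeasure μ] {w w' : Ω → ℝ}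
    (hw : Continuous w) (hw' : Continuous w') :
    ∃ s : ℝ, 1 < s ∧ (∀ k : ℤ, μ {x | w x = s * 2 ^ k} = 0) ∧
      (∀ k : ℤ, μ {x | w' x = s * 2 ^ k} = 0) := by
  have hcnt : ∀ g : Ω → ℝ, Continuous g → {c : ℝ | 0 < μ {x | g x = c}}.Countable := by
    intro g hg
    apply Measure.countable_meas_pos_of_disjoint_iUnion
      (As := fun c : ℝ => {x | g x = c})
    · intro c; exact (isClosed_eq hg continuous_const).measurableSet
    · intro c d hcd
      apply Set.disjoint_left.mpr
      intro x h1 h2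
      exact hcd (h1.symm.trans h2)
  set T := {c : ℝ | 0 < μ {x | w x = c}} ∪ {c : ℝ | 0 < μ {x | w' x = c}} with hT_def
  have hT : T.Countable := (hcnt w hw).union (hcnt w' hw')
  set B := ⋃ k : ℤ, (fun c : ℝ => c * 2 ^ k) '' T with hB_def
  have hB : B.Countable := countable_iUnion fun k => hT.image _
  have hvol : volume (Ioo (1:ℝ) 2 \ B) ≠ 0 := by
    rw [measure_diff_null (hB.measure_zero volume)]
    rw [Real.volume_Ioo]
    norm_num
  obtain ⟨t, ht⟩ := nonempty_of_measure_ne_zero hvol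
  have hs1 : 1 < t := ht.1.1
  have hkey : ∀ (g : Ω → ℝ), Continuous g → (∀ c ∈ T, ∀ k : ℤ, t ≠ c * 2 ^ k) →
      {c : ℝ | 0 < μ {x | g x = c}} ⊆ T → ∀ k : ℤ, μ {x | g x = t * 2 ^ k} = 0 := by
    intro g hg hsep hsub k
    by_contra hne
    have hpos : 0 < μ {x | g x = t * 2 ^ k} := pos_iff_ne_zero.mpr hne
    have hmem : t * 2 ^ k ∈ T := hsub hpos
    apply hsep _ hmem (-k)
    rw [mul_assoc, ← zpow_add₀ (two_ne_zero : (2:ℝ) ≠ 0)]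
    simp
  have hsep : ∀ c ∈ T, ∀ k : ℤ, t ≠ c * 2 ^ k := by
    intro c hc k hEq
    apply ht.2
    rw [hB_def]
    exact mem_iUnion.mpr ⟨k, ⟨c, hc, hEq.symm⟩⟩
  exact ⟨t, hs1,
    hkey w hw hsep fun c hc => Or.inl hc,
    hkey w' hw' hsep fun c hc => Or.inr hc⟩

/-- Part 2: weak Orlicz–Sobolev with `D₂` implies strong with `D₂ / 4`. -/
lemma part2 (hN : MemN N) {q : ℝ} (hq : 1 ≤ q)
    (hNq : MonotoneOn (fun t => N t ^ (1 / q) / t) (Ioi (0 : ℝ)))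
    {D₂ : ℝ} (hD : 0 < D₂)
    (hyp : ∀ g : Ω → ℝ, LipschitzOnBalls g → ∀ m' : ℝ, IsMedian μ g m' →
      ENNReal.ofReal (D₂ * weakOrliczNorm μ N fun x => g x - m') ≤
        gradLqNorm μ (ENNReal.ofReal q) g)
    (f : Ω → ℝ) (hf : LipschitzOnBalls f) (m : ℝ) (hm : IsMedian μ f m) :
    ENNReal.ofReal (D₂ / 4 * orliczNorm μ N fun x => f x - m) ≤
      gradLqNorm μ (ENNReal.ofReal q) f := by
  have hq0 : (0:ℝ) < q := lt_of_lt_of_le one_pos hq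
  set A := gradLqNorm μ (ENNReal.ofReal q) f with hA_def
  by_cases hAtop : A = ⊤
  · rw [hAtop]; exact le_top
  have hfc : Continuous f := continuous_of_LOB hf
  obtain ⟨s, hs1, hsw, hsw'⟩ := exists_good_scale μ
    (w := fun x => max (f x - m) 0) (w' := fun x => max (m - f x) 0)
    ((hfc.sub continuous_const).max continuous_const)
    ((continuous_const.sub hfc).max continuous_const)
  set p : ℝ≥0∞ := ENNReal.ofReal q with hp_def
  have hp0 : p ≠ 0 := by
    simp only [hp_def, ne_eq, ENNReal.ofReal_eq_zero, not_le]; exact hq0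
  have hptop : p ≠ ⊤ := ENNReal.ofReal_ne_top
  have hpreal : p.toReal = q := ENNReal.toReal_ofReal hq0.le
  set G : Ω → ℝ≥0∞ := fun x => (‖gradNorm f x‖₊ : ℝ≥0∞) ^ q with hG_def
  have hpow : ∀ ν : Measure Ω, eLpNorm (gradNorm f) p ν ^ q = ∫⁻ x, G x ∂ν := by
    intro ν
    simp only [hG_def, ← enorm_eq_nnnorm]
    rw [eLpNorm_eq_lintegral_rpow_enorm_toReal hp0 hptop, hpreal, ← ENNReal.rpow_mul,
      one_div_mul_cancel hq0.ne', ENNReal.rpow_one]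
  -- negation data
  have hnegf : LipschitzOnBalls (fun x => -f x) := LOB_comp lip_neg hf
  have hnegmed : IsMedian μ (fun x => -f x) (-m) := by
    constructor
    · refine le_trans hm.2 (measure_mono ?_)
      intro x hx
      simp only [mem_setOf_eq] at hx ⊢
      linarith
    · refine le_trans hm.1 (measure_mono ?_)
      intro x hx
      simp only [mem_setOf_eq] at hx ⊢
      linarith
  have hneggrad : gradLqNorm μ p (fun x => -f x) = A := by
    rw [hA_def, gradLqNorm, gradLqNorm, gradNorm_neg]
  have hsw'' : ∀ k : ℤ, μ {x | max (-f x - -m) 0 = s * 2 ^ k} = 0 := by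
    intro k
    have : {x | max (-f x - -m) 0 = s * 2 ^ k} = {x | max (m - f x) 0 = s * 2 ^ k} := by
      ext x
      rw [mem_setOf_eq, mem_setOf_eq, show -f x - -m = m - f x by ring]
    rw [this]
    exact hsw' k
  -- admissibility of any sufficiently large v
  have hadm : ∀ v : ℝ, 0 < v → A ≤ ENNReal.ofReal (D₂ * v / 4) →
      ∫⁻ x, ENNReal.ofReal (N (|f x - m| / v)) ∂μ ≤ 1 := by
    intro v hv hAv
    set K : ℝ≥0∞ := ENNReal.ofReal (D₂ * v / 4) ^ q with hK_def
    have hDv4 : (0:ℝ) < D₂ * v / 4 := by positivity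
    have hK0 : K ≠ 0 := by
      rw [hK_def]
      exact (ENNReal.rpow_pos (ENNReal.ofReal_pos.mpr hDv4) ENNReal.ofReal_ne_top).ne'
    have hKtop : K ≠ ⊤ := by
      rw [hK_def]
      exact ENNReal.rpow_ne_top_of_nonneg hq0.le ENNReal.ofReal_ne_top
    have h1 := pos_side μ hN hq hNq hD hyp f hf m hm hs1 hsw hv hAv
    have h2 := pos_side μ hN hq hNq hD hyp (fun x => -f x) hnegf (-m) hnegmed hs1 hsw''
      hv (by rw [hneggrad]; exact hAv)
    rw [show (gradNorm fun x => -f x) = gradNorm f from gradNorm_neg f] at h2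
    set U1 := {x | 0 < f x - m} with hU1_def
    set U2 := {x | 0 < -f x - -m} with hU2_def
    set U0 := {x | f x - m = 0} with hU0_def
    have hU1m : MeasurableSet U1 :=
      (isOpen_lt continuous_const (hfc.sub continuous_const)).measurableSet
    have hU2m : MeasurableSet U2 :=
      (isOpen_lt continuous_const ((hfc.neg).sub continuous_const)).measurableSet
    have hU0m : MeasurableSet U0 :=
      (isClosed_eq (hfc.sub continuous_const) continuous_const).measurableSet
    have hD12 : Disjoint U1 U2 := by
      apply Set.disjoint_left.mpr
      intro x h1' h2'
      simp only [hU1_def, hU2_def, mem_setOf_eq] at h1' h2'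
      linarith
    have hD120 : Disjoint (U1 ∪ U2) U0 := by
      apply Set.disjoint_left.mpr
      intro x h1' h2'
      simp only [hU0_def, mem_setOf_eq] at h2'
      rcases h1' with h | h
      · simp only [hU1_def, mem_setOf_eq] at h; linarith
      · simp only [hU2_def, mem_setOf_eq] at h; linarith
    have huniv : (univ : Set Ω) = (U1 ∪ U2) ∪ U0 := by
      ext x
      simp only [mem_univ, true_iff, mem_union, hU1_def, hU2_def, hU0_def, mem_setOf_eq]
      rcases lt_trichotomy (f x - m) 0 with h | h | h
      · exact Or.inl (Or.inr (by linarith))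
      · exact Or.inr h
      · exact Or.inl (Or.inl h)
    have hrestrict : ∀ g : Ω → ℝ≥0∞,
        ∫⁻ x, g x ∂μ = (∫⁻ x in U1, g x ∂μ) + (∫⁻ x in U2, g x ∂μ) + (∫⁻ x in U0, g x ∂μ) := by
      intro g
      conv_lhs => rw [← Measure.restrict_univ (μ := μ), huniv]
      rw [Measure.restrict_union hD120 hU0m, Measure.restrict_union hD12 hU2m,
        lintegral_add_measure, lintegral_add_measure]
    -- rewrite integrands on each piece
    have hI1 : ∫⁻ x in U1, ENNReal.ofReal (N (|f x - m| / v)) ∂μ ≤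
        (∫⁻ x in U1, G x ∂μ) / K := by
      refine le_trans (le_of_eq ?_) h1
      apply setLIntegral_congr_fun hU1m
      intro x hx
      simp only [hU1_def, mem_setOf_eq] at hx
      dsimp only
      rw [abs_of_pos hx]
    have hI2 : ∫⁻ x in U2, ENNReal.ofReal (N (|f x - m| / v)) ∂μ ≤
        (∫⁻ x in U2, G x ∂μ) / K := by
      refine le_trans (le_of_eq ?_) h2
      apply setLIntegral_congr_fun hU2m
      intro x hx
      simp only [hU2_def, mem_setOf_eq] at hx
      dsimp only
      rw [show |f x - m| = -f x - -m by rw [abs_of_neg (by linarith)]; ring]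
    have hI0 : ∫⁻ x in U0, ENNReal.ofReal (N (|f x - m| / v)) ∂μ = 0 := by
      rw [show (0:ℝ≥0∞) = ∫⁻ _x in U0, (0:ℝ≥0∞) ∂μ by simp]
      apply setLIntegral_congr_fun hU0m
      intro x hx
      simp only [hU0_def, mem_setOf_eq] at hx
      dsimp only
      rw [hx]
      simp [hN.zero]
    calc ∫⁻ x, ENNReal.ofReal (N (|f x - m| / v)) ∂μ
        = (∫⁻ x in U1, ENNReal.ofReal (N (|f x - m| / v)) ∂μ) +
          (∫⁻ x in U2, ENNReal.ofReal (N (|f x - m| / v)) ∂μ) +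
          (∫⁻ x in U0, ENNReal.ofReal (N (|f x - m| / v)) ∂μ) := hrestrict _
      _ ≤ (∫⁻ x in U1, G x ∂μ) / K + (∫⁻ x in U2, G x ∂μ) / K + 0 := by
          exact add_le_add (add_le_add hI1 hI2) (le_of_eq hI0)
      _ = ((∫⁻ x in U1, G x ∂μ) + (∫⁻ x in U2, G x ∂μ)) / K := by
          rw [add_zero, ENNReal.div_add_div_same]
      _ ≤ (∫⁻ x, G x ∂μ) / K := by
          apply ENNReal.div_le_div_right
          rw [hrestrict G]
          exact le_add_right le_rfl
      _ ≤ K / K := by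
          apply ENNReal.div_le_div_right
          rw [← hpow μ]
          exact ENNReal.rpow_le_rpow hAv hq0.le
      _ ≤ 1 := by rw [ENNReal.div_self hK0 hKtop]
  -- conclude
  set r := A.toReal with hr_def
  have hr0 : 0 ≤ r := ENNReal.toReal_nonneg
  have hAr : A = ENNReal.ofReal r := (ENNReal.ofReal_toReal hAtop).symm
  have hfinal : orliczNorm μ N (fun x => f x - m) ≤ 4 * r / D₂ := by
    apply le_of_forall_pos_le_add
    intro ε hε
    set v := 4 * r / D₂ + ε with hv_def
    have hv : 0 < v := by positivity
    have hAv : A ≤ ENNReal.ofReal (D₂ * v / 4) := by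
      rw [hAr]
      apply ENNReal.ofReal_le_ofReal
      rw [hv_def]
      rw [show D₂ * (4 * r / D₂ + ε) / 4 = r + D₂ * ε / 4 by
        have hD0 : D₂ ≠ 0 := hD.ne'
        field_simp]
      nlinarith
    exact csInf_le ⟨0, fun u hu => hu.1.le⟩ ⟨hv, hadm v hv hAv⟩
  have hmul : D₂ / 4 * orliczNorm μ N (fun x => f x - m) ≤ r := by
    have h0 : 0 ≤ orliczNorm μ N (fun x => f x - m) :=
      le_csInf ⟨_, ⟨(by positivity : (0:ℝ) < 4 * r / D₂ + 1),
        hadm _ (by positivity) (by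
          rw [hAr]
          apply ENNReal.ofReal_le_ofReal
          rw [show D₂ * (4 * r / D₂ + 1) / 4 = r + D₂ / 4 by
            have hD0 : D₂ ≠ 0 := hD.ne'
            field_simp]
          nlinarith)⟩⟩ fun u hu => hu.1.le
    calc D₂ / 4 * orliczNorm μ N (fun x => f x - m) ≤ D₂ / 4 * (4 * r / D₂) := by
          apply mul_le_mul_of_nonneg_left hfinal (by positivity)
      _ = r := by
          have hD0 : D₂ ≠ 0 := hD.ne'
          field_simp
  rw [hAr]
  exact ENNReal.ofReal_le_ofReal hmul


end Part2


/-- For `N ∈ 𝒩` with `N(t)^{1/q}/t` non-decreasing, the strong and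
weak-type Orlicz–Sobolev inequalities are equivalent: (1) with `D₁` gives (2) with `D₂ = D₁`,
and (2) with `D₂` gives (1) with `D₂/4` (so `D₁ ≤ D₂ ≤ 4·D₁`). -/
theorem orlicz_sobolev_iff_weak_orlicz_sobolev {Ω : Type*} [MetricSpace Ω]
    [TopologicalSpace.SeparableSpace Ω] [MeasurableSpace Ω] [BorelSpace Ω]
    (μ : Measure Ω) [IsProbabilityMeasure μ] (hnd : ∀ x : Ω, μ {x} ≠ 1)
    (N : ℝ → ℝ) (hN : MemN N) (q : ℝ) (hq : 1 ≤ q)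
    (hNq : MonotoneOn (fun t => N t ^ (1 / q) / t) (Ioi (0 : ℝ))) :
    (∀ D₁ : ℝ, 0 < D₁ →
      (∀ f : Ω → ℝ, LipschitzOnBalls f → ∀ m : ℝ, IsMedian μ f m →
        ENNReal.ofReal (D₁ * orliczNorm μ N fun x => f x - m) ≤
          gradLqNorm μ (ENNReal.ofReal q) f) →
      ∀ f : Ω → ℝ, LipschitzOnBalls f → ∀ m : ℝ, IsMedian μ f m →
        ENNReal.ofReal (D₁ * weakOrliczNorm μ N fun x => f x - m) ≤
          gradLqNorm μ (ENNReal.ofReal q) f) ∧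
    (∀ D₂ : ℝ, 0 < D₂ →
      (∀ f : Ω → ℝ, LipschitzOnBalls f → ∀ m : ℝ, IsMedian μ f m →
        ENNReal.ofReal (D₂ * weakOrliczNorm μ N fun x => f x - m) ≤
          gradLqNorm μ (ENNReal.ofReal q) f) →
      ∀ f : Ω → ℝ, LipschitzOnBalls f → ∀ m : ℝ, IsMedian μ f m →
        ENNReal.ofReal (D₂ / 4 * orliczNorm μ N fun x => f x - m) ≤
          gradLqNorm μ (ENNReal.ofReal q) f) := by
  constructor
  · intro D₁ hD₁ hyp1 f hf m hm
    exact part1 μ hN q D₁ hD₁ hyp1 f hf m hm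
  · intro D₂ hD₂ hyp2 f hf m hm
    exact part2 μ hN hq hNq hD₂ hyp2 f hf m hm

end
end

section
/- Let (Ω,d,μ) be a metric probability space, 1 ≤ q < ∞, and let N ∈ 𝒩 be such that t ↦ N(t)^{1/q}/t is non-decreasing on (0,∞). Define N₀(t) := 2·(t/N^{−1}(2))^q for t ∈ [0, N^{−1}(2)] and N₀(t) := N(t) for t ≥ N^{−1}(2). Then the following are equivalent: (1) D₁·‖f − M_μ f‖_{N(μ)} ≤ ‖|∇f|‖_{L_q(μ)} for all f ∈ ℱ; (2) D₂·‖f − M_μ f‖_{N₀(μ)} ≤ ‖|∇f|‖_{L_q(μ)} for all f ∈ ℱ; and the best constants satisfy D₁/4 ≤ D₂ ≤ 4 D₁. -/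
open MeasureTheory Filter Set Metric
open scoped ENNReal NNReal Topology

noncomputable section

variable {Ω : Type*}

/-- The modification `N₀` of `N`, replaced below `N⁻¹(2)` by the homogeneous `q`-power. -/
def modifiedYoung (N : ℝ → ℝ) (q : ℝ) : ℝ → ℝ := fun t =>
  if t ≤ ninv N 2 then 2 * (t / ninv N 2) ^ q else N t

section AuxOSM

variable {N : ℝ → ℝ} {q : ℝ}

lemma MemN.nonneg' (hN : MemN N) {t : ℝ} (ht : 0 ≤ t) : 0 ≤ N t := hN.mapsTo ht

lemma MemN.zero' (hN : MemN N) : N 0 = 0 := by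
  rcases le_or_gt (N 0) 0 with h | h
  · exact le_antisymm h (hN.nonneg' le_rfl)
  · obtain ⟨t, ht, hNt⟩ := hN.surjOn (show N 0 / 2 ∈ Ici (0:ℝ) from by
      simp only [mem_Ici]; linarith)
    have hmono := hN.strictMonoOn.monotoneOn (self_mem_Ici) ht ht
    rw [hNt] at hmono
    linarith

lemma ninv_two_spec (hN : MemN N) : 0 < ninv N 2 ∧ N (ninv N 2) = 2 := by
  obtain ⟨t₀, ht₀, hNt₀⟩ := hN.surjOn (show (2:ℝ) ∈ Ici (0:ℝ) by norm_num)
  have hset : {t : ℝ | 0 ≤ t ∧ 2 ≤ N t} = Ici 0 ∩ N ⁻¹' (Ici 2) := by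
    ext t; simp [Set.mem_setOf_eq]
  have hclosed : IsClosed {t : ℝ | 0 ≤ t ∧ 2 ≤ N t} := by
    rw [hset]
    exact hN.contOn.preimage_isClosed_of_isClosed isClosed_Ici isClosed_Ici
  have hne : {t : ℝ | 0 ≤ t ∧ 2 ≤ N t}.Nonempty := ⟨t₀, ht₀, hNt₀.ge⟩
  have hbdd : BddBelow {t : ℝ | 0 ≤ t ∧ 2 ≤ N t} := ⟨0, fun t ht => ht.1⟩
  have hmem : ninv N 2 ∈ {t : ℝ | 0 ≤ t ∧ 2 ≤ N t} := hclosed.csInf_mem hne hbdd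
  obtain ⟨ha0, ha2⟩ := hmem
  have hle : ninv N 2 ≤ t₀ := csInf_le hbdd ⟨ht₀, hNt₀.ge⟩
  have h2 : N (ninv N 2) ≤ 2 := by
    have hm := hN.strictMonoOn.monotoneOn ha0 ht₀ hle
    rw [hNt₀] at hm; exact hm
  refine ⟨?_, le_antisymm h2 ha2⟩
  rcases ha0.eq_or_lt with h | h
  · exfalso; rw [← h, hN.zero'] at ha2; linarith
  · exact h

lemma memN_ratio_le (hN : MemN N) (hq : 1 ≤ q)
    (hNq : MonotoneOn (fun t => N t ^ (1 / q) / t) (Ioi (0 : ℝ)))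
    {s t : ℝ} (hs : 0 < s) (hst : s ≤ t) : N s ≤ (s / t) ^ q * N t := by
  have ht : 0 < t := hs.trans_le hst
  have hq0 : q ≠ 0 := by positivity
  have hNs : 0 ≤ N s := hN.nonneg' hs.le
  have hNt : 0 ≤ N t := hN.nonneg' ht.le
  have h := hNq (mem_Ioi.2 hs) (mem_Ioi.2 ht) hst
  simp only at h
  have h1 : N s ^ (1/q) ≤ (s / t) * N t ^ (1/q) := by
    rw [div_le_div_iff₀ hs ht] at h
    rw [div_mul_eq_mul_div, le_div_iff₀ ht]
    linarith
  have h2 : (N s ^ (1/q)) ^ q ≤ ((s/t) * N t ^ (1/q)) ^ q :=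
    Real.rpow_le_rpow (Real.rpow_nonneg hNs _) h1 (by linarith)
  have e1 : (N s ^ (1/q)) ^ q = N s := by
    rw [← Real.rpow_mul hNs, one_div_mul_cancel hq0, Real.rpow_one]
  have e2 : ((s/t) * N t ^ (1/q)) ^ q = (s/t)^q * N t := by
    rw [Real.mul_rpow (by positivity) (Real.rpow_nonneg hNt _),
        ← Real.rpow_mul hNt, one_div_mul_cancel hq0, Real.rpow_one]
  rw [e1, e2] at h2; exact h2

lemma claimB (hN : MemN N) (hq : 1 ≤ q)
    (hNq : MonotoneOn (fun t => N t ^ (1 / q) / t) (Ioi (0 : ℝ)))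
    {s : ℝ} (hs : 0 ≤ s) : (s / ninv N 2) ^ q ≤ 1 + (1/2) * N s := by
  obtain ⟨ha, hNa⟩ := ninv_two_spec hN
  have hNs := hN.nonneg' hs
  rcases le_or_gt s (ninv N 2) with h | h
  · have h1 : (s / ninv N 2) ^ q ≤ 1 :=
      Real.rpow_le_one (by positivity) ((div_le_one ha).2 h) (by linarith)
    linarith
  · have hr := memN_ratio_le hN hq hNq ha h.le
    rw [hNa] at hr
    have hinv : (ninv N 2 / s) ^ q = ((s / ninv N 2) ^ q)⁻¹ := by
      rw [← Real.inv_rpow (div_nonneg hs ha.le), inv_div]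
    rw [hinv] at hr
    have hpos : 0 < (s / ninv N 2) ^ q := Real.rpow_pos_of_pos (div_pos (ha.trans h) ha) _
    rw [inv_mul_eq_div, le_div_iff₀ hpos] at hr
    linarith

lemma claimC (hN : MemN N) (hq : 1 ≤ q)
    (hNq : MonotoneOn (fun t => N t ^ (1 / q) / t) (Ioi (0 : ℝ)))
    {s : ℝ} (hs : 0 ≤ s) : modifiedYoung N q (s / 4) ≤ 1/2 + (1/2) * N s := by
  obtain ⟨ha, hNa⟩ := ninv_two_spec hN
  have hNs := hN.nonneg' hs
  have h14 : (1/4 : ℝ) ^ q ≤ 1/4 := by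
    have h := Real.rpow_le_rpow_of_exponent_ge (by norm_num : (0:ℝ) < 1/4) (by norm_num) hq
    rwa [Real.rpow_one] at h
  simp only [modifiedYoung]
  split_ifs with h
  · have hB := claimB hN hq hNq hs
    have harg : s / 4 / ninv N 2 = (1/4) * (s / ninv N 2) := by ring
    rw [harg, Real.mul_rpow (by norm_num) (by positivity)]
    have hsa : (0:ℝ) ≤ (s / ninv N 2) ^ q := Real.rpow_nonneg (by positivity) _
    have hmul := mul_le_mul_of_nonneg_right h14 hsa
    linarith
  · push_neg at h
    have hs4 : 0 < s / 4 := lt_trans ha h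
    have hr := memN_ratio_le hN hq hNq hs4 (by linarith : s/4 ≤ s)
    have hspos : 0 < s := by linarith
    have hss : s / 4 / s = 1/4 := by
      field_simp
    rw [hss] at hr
    have hmul := mul_le_mul_of_nonneg_right h14 hNs
    linarith

lemma N_le_modifiedYoung (hN : MemN N) (hq : 1 ≤ q)
    (hNq : MonotoneOn (fun t => N t ^ (1 / q) / t) (Ioi (0 : ℝ)))
    {s : ℝ} (hs : 0 ≤ s) : N s ≤ modifiedYoung N q s := by
  obtain ⟨ha, hNa⟩ := ninv_two_spec hN
  simp only [modifiedYoung]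
  split_ifs with h
  · rcases hs.eq_or_lt with h0 | h0
    · rw [← h0, hN.zero', zero_div, Real.zero_rpow (by positivity : q ≠ 0)]
      norm_num
    · have hr := memN_ratio_le hN hq hNq h0 h
      rw [hNa] at hr; linarith
  · exact le_rfl

lemma orlicz_compare {Ω : Type*} [MeasurableSpace Ω] (μ : Measure Ω) [IsProbabilityMeasure μ]
    (hN : MemN N) (hq : 1 ≤ q)
    (hNq : MonotoneOn (fun t => N t ^ (1 / q) / t) (Ioi (0 : ℝ))) (g : Ω → ℝ) :
    orliczNorm μ (modifiedYoung N q) g ≤ 4 * orliczNorm μ N g ∧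
      orliczNorm μ N g ≤ orliczNorm μ (modifiedYoung N q) g := by
  simp only [orliczNorm]
  set SN := {v : ℝ | 0 < v ∧ (∫⁻ x, ENNReal.ofReal (N (|g x| / v)) ∂μ) ≤ 1} with hSN
  set S0 := {v : ℝ | 0 < v ∧
      (∫⁻ x, ENNReal.ofReal (modifiedYoung N q (|g x| / v)) ∂μ) ≤ 1} with hS0
  have hbddN : BddBelow SN := ⟨0, fun v hv => hv.1.le⟩
  have hbdd0 : BddBelow S0 := ⟨0, fun v hv => hv.1.le⟩
  have hsub : S0 ⊆ SN := by
    intro v hv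
    refine ⟨hv.1, le_trans (lintegral_mono fun x => ?_) hv.2⟩
    exact ENNReal.ofReal_le_ofReal
      (N_le_modifiedYoung hN hq hNq (div_nonneg (abs_nonneg _) hv.1.le))
  have hmem : ∀ u ∈ SN, 4 * u ∈ S0 := by
    intro u hu
    obtain ⟨hu0, huI⟩ := hu
    refine ⟨by linarith, ?_⟩
    have step : ∀ x, ENNReal.ofReal (modifiedYoung N q (|g x| / (4 * u))) ≤
        ENNReal.ofReal (1/2) + ENNReal.ofReal (1/2) * ENNReal.ofReal (N (|g x| / u)) := by
      intro x
      have harg : |g x| / (4 * u) = (|g x| / u) / 4 := by ring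
      have hC := claimC hN hq hNq (div_nonneg (abs_nonneg (g x)) hu0.le)
      have hNs : 0 ≤ N (|g x| / u) := hN.nonneg' (div_nonneg (abs_nonneg _) hu0.le)
      calc ENNReal.ofReal (modifiedYoung N q (|g x| / (4 * u)))
          ≤ ENNReal.ofReal (1/2 + (1/2) * N (|g x| / u)) := by
            rw [harg]; exact ENNReal.ofReal_le_ofReal hC
        _ = ENNReal.ofReal (1/2) + ENNReal.ofReal ((1/2) * N (|g x| / u)) :=
            ENNReal.ofReal_add (by norm_num) (by positivity)
        _ = _ := by rw [ENNReal.ofReal_mul (by norm_num)]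
    calc (∫⁻ x, ENNReal.ofReal (modifiedYoung N q (|g x| / (4 * u))) ∂μ)
        ≤ ∫⁻ x, (ENNReal.ofReal (1/2) +
            ENNReal.ofReal (1/2) * ENNReal.ofReal (N (|g x| / u))) ∂μ :=
          lintegral_mono step
      _ = ENNReal.ofReal (1/2) * μ Set.univ +
            ENNReal.ofReal (1/2) * ∫⁻ x, ENNReal.ofReal (N (|g x| / u)) ∂μ := by
          rw [lintegral_add_left measurable_const, lintegral_const,
              lintegral_const_mul' _ _ ENNReal.ofReal_ne_top]
      _ ≤ ENNReal.ofReal (1/2) * 1 + ENNReal.ofReal (1/2) * 1 := by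
          rw [measure_univ]
          exact add_le_add_right (mul_le_mul_right huI _) _
      _ = 1 := by
          rw [mul_one, ← ENNReal.ofReal_add (by norm_num) (by norm_num)]
          norm_num
  constructor
  · rcases SN.eq_empty_or_nonempty with hemp | hne
    · have h0 : S0 = ∅ := Set.eq_empty_of_subset_empty (hemp ▸ hsub)
      rw [h0, hemp, Real.sInf_empty]; norm_num
    · have hle : sInf S0 / 4 ≤ sInf SN := by
        apply le_csInf hne
        intro u hu
        have hu4 := csInf_le hbdd0 (hmem u hu)
        linarith
      linarith
  · rcases SN.eq_empty_or_nonempty with hemp | hne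
    · have h0 : S0 = ∅ := Set.eq_empty_of_subset_empty (hemp ▸ hsub)
      rw [h0, hemp]
    · obtain ⟨u, hu⟩ := hne
      exact csInf_le_csInf hbddN ⟨4*u, hmem u hu⟩ hsub

lemma orliczNorm_nonneg' {Ω : Type*} [MeasurableSpace Ω] (μ : Measure Ω) (N : ℝ → ℝ)
    (g : Ω → ℝ) : 0 ≤ orliczNorm μ N g :=
  Real.sInf_nonneg fun _ hv => hv.1.le

end AuxOSM

/-- The behavior of `N` near 0 is irrelevant: the Orlicz–Sobolev inequalities
for `N` and for `N₀` are equivalent: (1) with `D₁` gives (2) with `D₁/4`, and (2) with `D₂`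
gives (1) with `D₂/4` (so `D₁/4 ≤ D₂ ≤ 4·D₁`). -/
theorem orlicz_sobolev_modification_at_zero {Ω : Type*} [MetricSpace Ω]
    [TopologicalSpace.SeparableSpace Ω] [MeasurableSpace Ω] [BorelSpace Ω]
    (μ : Measure Ω) [IsProbabilityMeasure μ] (hnd : ∀ x : Ω, μ {x} ≠ 1)
    (N : ℝ → ℝ) (hN : MemN N) (q : ℝ) (hq : 1 ≤ q)
    (hNq : MonotoneOn (fun t => N t ^ (1 / q) / t) (Ioi (0 : ℝ))) :
    (∀ D₁ : ℝ, 0 < D₁ →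
      (∀ f : Ω → ℝ, LipschitzOnBalls f → ∀ m : ℝ, IsMedian μ f m →
        ENNReal.ofReal (D₁ * orliczNorm μ N fun x => f x - m) ≤
          gradLqNorm μ (ENNReal.ofReal q) f) →
      ∀ f : Ω → ℝ, LipschitzOnBalls f → ∀ m : ℝ, IsMedian μ f m →
        ENNReal.ofReal (D₁ / 4 * orliczNorm μ (modifiedYoung N q) fun x => f x - m) ≤
          gradLqNorm μ (ENNReal.ofReal q) f) ∧
    (∀ D₂ : ℝ, 0 < D₂ →
      (∀ f : Ω → ℝ, LipschitzOnBalls f → ∀ m : ℝ, IsMedian μ f m →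
        ENNReal.ofReal (D₂ * orliczNorm μ (modifiedYoung N q) fun x => f x - m) ≤
          gradLqNorm μ (ENNReal.ofReal q) f) →
      ∀ f : Ω → ℝ, LipschitzOnBalls f → ∀ m : ℝ, IsMedian μ f m →
        ENNReal.ofReal (D₂ / 4 * orliczNorm μ N fun x => f x - m) ≤
          gradLqNorm μ (ENNReal.ofReal q) f) := by
  constructor
  · intro D hD h f hf m hm
    have hgrad := h f hf m hm
    have hcomp := orlicz_compare μ hN hq hNq (fun x => f x - m)
    have hnn := orliczNorm_nonneg' μ N (fun x => f x - m)
    have h1 : D / 4 * orliczNorm μ (modifiedYoung N q) (fun x => f x - m) ≤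
        D * orliczNorm μ N (fun x => f x - m) := by nlinarith [hcomp.1]
    exact le_trans (ENNReal.ofReal_le_ofReal h1) hgrad
  · intro D hD h f hf m hm
    have hgrad := h f hf m hm
    have hcomp := orlicz_compare μ hN hq hNq (fun x => f x - m)
    have hnn := orliczNorm_nonneg' μ N (fun x => f x - m)
    have h1 : D / 4 * orliczNorm μ N (fun x => f x - m) ≤
        D * orliczNorm μ (modifiedYoung N q) (fun x => f x - m) := by nlinarith [hcomp.2]
    exact le_trans (ENNReal.ofReal_le_ofReal h1) hgrad

end
end
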